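/- The integral ∫_{1.1}^{1.9} r(x)·g(x) dx equals (ln(2.9/1.9)/ln(2.9/1.1) + 1/2)² − 0.1/ln(2.9/1.1) − 3/4. -/

import Mathlib

noncomputable def a₁ : ℝ := 2.9 / (2.9 / 1.1) ^ (0.95 : ℝ)
noncomputable def a₂ : ℝ := 2.9 / (2.9 / 1.1) ^ (0.45 : ℝ)

/-- The piecewise function `r` on `[1.1, 1.9]`. -/
noncomputable def r (x : ℝ) : ℝ :=
  if x < a₁ then (x - 1) / 2
  else if x ≤ a₂ then
    (x - 1) / 2 - (1 / Real.log (2.9 / 1.1)) *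
      Real.log (2.9 / (1 + 2 * Real.log (2.9 / x) / Real.log (2.9 / 1.1)))
  else (x - 1) / 2 - Real.log (2.9 / 1.9) / Real.log (2.9 / 1.1)

/-- The density `g` on `[1.1, 2.9]`. -/
noncomputable def g (x : ℝ) : ℝ := 1 / (x * Real.log (2.9 / 1.1))

namespace Stmt9Aux

lemma hLpos : 0 < Real.log (2.9 / 1.1) := Real.log_pos (by norm_num)

lemma rpow_pos1 : (0:ℝ) < (2.9 / 1.1) ^ (0.95 : ℝ) := Real.rpow_pos_of_pos (by norm_num) _
lemma rpow_pos2 : (0:ℝ) < (2.9 / 1.1) ^ (0.45 : ℝ) := Real.rpow_pos_of_pos (by norm_num) _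

lemma a1_pos : 0 < a₁ := by unfold a₁; positivity
lemma a2_pos : 0 < a₂ := by unfold a₂; positivity

lemma log_a1 : Real.log a₁ = Real.log 2.9 - 0.95 * Real.log (2.9 / 1.1) := by
  unfold a₁
  rw [Real.log_div (by norm_num) rpow_pos1.ne', Real.log_rpow (by norm_num)]

lemma log_a2 : Real.log a₂ = Real.log 2.9 - 0.45 * Real.log (2.9 / 1.1) := by
  unfold a₂
  rw [Real.log_div (by norm_num) rpow_pos2.ne', Real.log_rpow (by norm_num)]

lemma a1_gt : (1.1:ℝ) < a₁ := by
  have h : (2.9 / 1.1 : ℝ) ^ (0.95:ℝ) < (2.9/1.1) ^ (1:ℝ) :=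
    Real.rpow_lt_rpow_of_exponent_lt (by norm_num) (by norm_num)
  rw [Real.rpow_one] at h
  unfold a₁
  rw [lt_div_iff₀ rpow_pos1]
  nlinarith [rpow_pos1]

lemma a1_lt_a2 : a₁ < a₂ := by
  have h : (2.9 / 1.1 : ℝ) ^ (0.45:ℝ) < (2.9/1.1) ^ (0.95:ℝ) :=
    Real.rpow_lt_rpow_of_exponent_lt (by norm_num) (by norm_num)
  unfold a₁ a₂
  rw [div_lt_div_iff₀ rpow_pos1 rpow_pos2]
  nlinarith [rpow_pos1, rpow_pos2]

lemma a2_lt : a₂ < (1.9:ℝ) := by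
  have key : (2.9/1.9 : ℝ) < (2.9/1.1) ^ (0.45:ℝ) := by
    have h20 : ((2.9/1.9 : ℝ))^(20:ℕ) < ((2.9/1.1 : ℝ) ^ (0.45:ℝ))^(20:ℕ) := by
      have : ((2.9/1.1 : ℝ) ^ (0.45:ℝ))^(20:ℕ) = (2.9/1.1 : ℝ)^(9:ℕ) := by
        rw [← Real.rpow_natCast ((2.9/1.1 : ℝ) ^ (0.45:ℝ)) 20, ← Real.rpow_mul (by norm_num)]
        rw [← Real.rpow_natCast (2.9/1.1 : ℝ) 9]
        norm_num
      rw [this]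
      norm_num
    exact lt_of_pow_lt_pow_left₀ 20 rpow_pos2.le h20
  unfold a₂
  rw [div_lt_iff₀ rpow_pos2]
  rw [div_lt_iff₀ (by norm_num : (0:ℝ) < 1.9)] at key
  linarith

/-- closed-form integrands on the three pieces -/
noncomputable def f1 (x : ℝ) : ℝ := (x - 1) / 2 * g x
noncomputable def f2 (x : ℝ) : ℝ :=
  ((x - 1) / 2 - (1 / Real.log (2.9 / 1.1)) *
      Real.log (2.9 / (1 + 2 * Real.log (2.9 / x) / Real.log (2.9 / 1.1)))) * g x
noncomputable def f3 (x : ℝ) : ℝ :=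
  ((x - 1) / 2 - Real.log (2.9 / 1.9) / Real.log (2.9 / 1.1)) * g x

/-- antiderivatives -/
noncomputable def F1 (x : ℝ) : ℝ := (x - Real.log x) / (2 * Real.log (2.9 / 1.1))
noncomputable def F2 (x : ℝ) : ℝ := (x - Real.log x) / (2 * Real.log (2.9 / 1.1)) +
  ((Real.log 2.9 - Real.log x) / Real.log (2.9 / 1.1) * Real.log 2.9 -
    ((1 + 2 * (Real.log 2.9 - Real.log x) / Real.log (2.9 / 1.1)) *
        Real.log (1 + 2 * (Real.log 2.9 - Real.log x) / Real.log (2.9 / 1.1)) -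
      (1 + 2 * (Real.log 2.9 - Real.log x) / Real.log (2.9 / 1.1))) / 2) / Real.log (2.9 / 1.1)
noncomputable def F3 (x : ℝ) : ℝ := (x - Real.log x) / (2 * Real.log (2.9 / 1.1)) -
  Real.log (2.9 / 1.9) * Real.log x / (Real.log (2.9 / 1.1)) ^ 2

lemma hF1 (x : ℝ) (hx : 0 < x) : HasDerivAt F1 (f1 x) x := by
  have h : HasDerivAt (fun y : ℝ => (y - Real.log y) / (2 * Real.log (2.9 / 1.1)))
      ((1 - x⁻¹) / (2 * Real.log (2.9 / 1.1))) x :=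
    ((hasDerivAt_id x).sub (Real.hasDerivAt_log hx.ne')).div_const _
  have : F1 = fun y : ℝ => (y - Real.log y) / (2 * Real.log (2.9 / 1.1)) := rfl
  rw [this]
  convert h using 1
  unfold f1 g
  field_simp [hx.ne', hLpos.ne']

lemma hF3 (x : ℝ) (hx : 0 < x) : HasDerivAt F3 (f3 x) x := by
  have h1 : HasDerivAt (fun y : ℝ => (y - Real.log y) / (2 * Real.log (2.9 / 1.1)))
      ((1 - x⁻¹) / (2 * Real.log (2.9 / 1.1))) x :=
    ((hasDerivAt_id x).sub (Real.hasDerivAt_log hx.ne')).div_const _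
  have h2 : HasDerivAt (fun y : ℝ => Real.log (2.9/1.9) * Real.log y / (Real.log (2.9/1.1))^2)
      (Real.log (2.9/1.9) * x⁻¹ / (Real.log (2.9/1.1))^2) x :=
    ((Real.hasDerivAt_log hx.ne').const_mul _).div_const _
  have h := h1.sub h2
  have he : F3 = fun y : ℝ => (y - Real.log y) / (2 * Real.log (2.9 / 1.1)) -
      Real.log (2.9/1.9) * Real.log y / (Real.log (2.9/1.1))^2 := rfl
  rw [he]
  refine h.congr_deriv ?_
  symm
  unfold f3 g
  field_simp [hx.ne', hLpos.ne']

lemma hF2 (x : ℝ) (hx : 0 < x) (hv : 0 < 1 + 2 * Real.log (2.9 / x) / Real.log (2.9 / 1.1)) :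
    HasDerivAt F2 (f2 x) x := by
  have hL := hLpos
  have hlog29x : Real.log (2.9 / x) = Real.log 2.9 - Real.log x :=
    Real.log_div (by norm_num) hx.ne'
  rw [hlog29x] at hv
  have hu : HasDerivAt (fun y : ℝ => (Real.log 2.9 - Real.log y) / Real.log (2.9 / 1.1))
      ((0 - x⁻¹) / Real.log (2.9 / 1.1)) x :=
    ((hasDerivAt_const x (Real.log 2.9)).sub (Real.hasDerivAt_log hx.ne')).div_const _
  have hw : HasDerivAt (fun y : ℝ => 1 + 2 * (Real.log 2.9 - Real.log y) / Real.log (2.9 / 1.1))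
      (2 * (0 - x⁻¹) / Real.log (2.9 / 1.1)) x := by
    have := (((hasDerivAt_const x (Real.log 2.9)).sub
        (Real.hasDerivAt_log hx.ne')).const_mul 2).div_const (Real.log (2.9 / 1.1))
    exact this.const_add 1
  have hlogw := hw.log hv.ne'
  have hterm := (hw.mul hlogw).sub hw
  have hH := (hu.mul_const (Real.log 2.9)).sub (hterm.div_const 2)
  have h1 : HasDerivAt (fun y : ℝ => (y - Real.log y) / (2 * Real.log (2.9 / 1.1)))
      ((1 - x⁻¹) / (2 * Real.log (2.9 / 1.1))) x :=
    ((hasDerivAt_id x).sub (Real.hasDerivAt_log hx.ne')).div_const _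
  have h := h1.add (hH.div_const (Real.log (2.9 / 1.1)))
  rw [mul_div_cancel₀ (2 * (0 - x⁻¹) / Real.log (2.9 / 1.1)) hv.ne'] at h
  have he : F2 = fun y : ℝ => (y - Real.log y) / (2 * Real.log (2.9 / 1.1)) +
      ((Real.log 2.9 - Real.log y) / Real.log (2.9 / 1.1) * Real.log 2.9 -
        ((1 + 2 * (Real.log 2.9 - Real.log y) / Real.log (2.9 / 1.1)) *
            Real.log (1 + 2 * (Real.log 2.9 - Real.log y) / Real.log (2.9 / 1.1)) -
          (1 + 2 * (Real.log 2.9 - Real.log y) / Real.log (2.9 / 1.1))) / 2) /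
        Real.log (2.9 / 1.1) := rfl
  rw [he]
  refine h.congr_deriv ?_
  symm
  unfold f2 g
  rw [hlog29x, Real.log_div (by norm_num : (2.9:ℝ) ≠ 0) hv.ne']
  set L := Real.log (2.9 / 1.1) with hLd
  set A := Real.log 2.9 with hAd
  set lx := Real.log x with hlxd
  set lw := Real.log (1 + 2 * (A - lx) / L) with hlwd
  have hwne : 1 + 2 * (A - lx) / L ≠ 0 := hv.ne'
  field_simp [hx.ne', hL.ne', hwne]
  first | ring | exact Or.inl (by ring)


lemma w_pos {x : ℝ} (hx1 : 0 < x) (hx2 : x ≤ 2.9) :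
    0 < 1 + 2 * Real.log (2.9 / x) / Real.log (2.9 / 1.1) := by
  have h1 : (0:ℝ) ≤ Real.log (2.9 / x) := Real.log_nonneg ((one_le_div hx1).mpr hx2)
  have h2 := hLpos
  positivity

lemma w_a1 : 1 + 2 * (Real.log 2.9 - Real.log a₁) / Real.log (2.9 / 1.1) = 2.9 := by
  rw [log_a1]
  field_simp
  ring

lemma w_a2 : 1 + 2 * (Real.log 2.9 - Real.log a₂) / Real.log (2.9 / 1.1) = 1.9 := by
  rw [log_a2]
  field_simp
  ring

lemma eq1 : Set.EqOn (fun x => r x * g x) (fun x => f1 x) (Set.uIcc 1.1 a₁) := by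
  rw [Set.uIcc_of_le a1_gt.le]
  intro x hx
  show r x * g x = f1 x
  unfold r f1
  rcases lt_or_eq_of_le hx.2 with h | h
  · rw [if_pos h]
  · rw [h, if_neg (lt_irrefl _), if_pos a1_lt_a2.le]
    have hterm : (1 + 2 * Real.log (2.9 / a₁) / Real.log (2.9 / 1.1)) = 2.9 := by
      rw [Real.log_div (by norm_num) a1_pos.ne']
      exact w_a1
    rw [hterm, div_self (by norm_num : (2.9:ℝ) ≠ 0), Real.log_one, mul_zero, sub_zero]

lemma eq2 : Set.EqOn (fun x => r x * g x) (fun x => f2 x) (Set.uIcc a₁ a₂) := by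
  rw [Set.uIcc_of_le a1_lt_a2.le]
  intro x hx
  show r x * g x = f2 x
  unfold r f2
  rw [if_neg (not_lt.mpr hx.1), if_pos hx.2]

lemma eq3 : Set.EqOn (fun x => r x * g x) (fun x => f3 x) (Set.uIcc a₂ 1.9) := by
  rw [Set.uIcc_of_le a2_lt.le]
  intro x hx
  show r x * g x = f3 x
  unfold r f3
  rcases eq_or_lt_of_le hx.1 with h | h
  · rw [← h, if_neg (not_lt.mpr a1_lt_a2.le), if_pos le_rfl]
    have hterm : (1 + 2 * Real.log (2.9 / a₂) / Real.log (2.9 / 1.1)) = 1.9 := by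
      rw [Real.log_div (by norm_num) a2_pos.ne']
      exact w_a2
    rw [hterm]
    ring
  · rw [if_neg (not_lt.mpr (a1_lt_a2.le.trans h.le)), if_neg (not_le.mpr h)]

lemma contg {s : Set ℝ} (hs : ∀ x ∈ s, x ≠ 0) : ContinuousOn g s := by
  unfold g
  exact continuousOn_const.div ((continuous_id.mul continuous_const).continuousOn)
    (fun x hx => mul_ne_zero (hs x hx) hLpos.ne')

lemma cont1 : ContinuousOn (fun x => f1 x) (Set.uIcc 1.1 a₁) := by
  rw [Set.uIcc_of_le a1_gt.le]
  unfold f1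
  exact ((continuous_id.sub continuous_const).div_const 2).continuousOn.mul
    (contg (fun x hx => by have := hx.1; norm_num at this ⊢; linarith))

lemma cont3 : ContinuousOn (fun x => f3 x) (Set.uIcc a₂ 1.9) := by
  rw [Set.uIcc_of_le a2_lt.le]
  unfold f3
  have ha2 := a2_pos
  exact (((continuous_id.sub continuous_const).div_const 2).continuousOn.sub
    continuousOn_const).mul (contg (fun x hx => by have := hx.1; nlinarith))

lemma cont2 : ContinuousOn (fun x => f2 x) (Set.uIcc a₁ a₂) := by
  rw [Set.uIcc_of_le a1_lt_a2.le]
  unfold f2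
  have ha1 := a1_pos
  have hxpos : ∀ x ∈ Set.Icc a₁ a₂, 0 < x := fun x hx => lt_of_lt_of_le ha1 hx.1
  have hc0 : ContinuousOn (fun x : ℝ => 2.9 / x) (Set.Icc a₁ a₂) :=
    continuousOn_const.div continuousOn_id (fun x hx => (hxpos x hx).ne')
  have hc1 : ContinuousOn (fun x : ℝ => Real.log (2.9 / x)) (Set.Icc a₁ a₂) :=
    hc0.log (fun x hx => ne_of_gt (div_pos (by norm_num) (hxpos x hx)))
  have hc2 : ContinuousOn
      (fun x : ℝ => 1 + 2 * Real.log (2.9 / x) / Real.log (2.9 / 1.1)) (Set.Icc a₁ a₂) :=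
    continuousOn_const.add ((continuousOn_const.mul hc1).div_const _)
  have hwpos : ∀ x ∈ Set.Icc a₁ a₂,
      0 < 1 + 2 * Real.log (2.9 / x) / Real.log (2.9 / 1.1) := fun x hx =>
    w_pos (hxpos x hx) (by have := hx.2; have := a2_lt; norm_num; nlinarith)
  have hc3 : ContinuousOn (fun x : ℝ =>
      Real.log (2.9 / (1 + 2 * Real.log (2.9 / x) / Real.log (2.9 / 1.1)))) (Set.Icc a₁ a₂) :=
    (continuousOn_const.div hc2 (fun x hx => (hwpos x hx).ne')).log
      (fun x hx => ne_of_gt (div_pos (by norm_num) (hwpos x hx)))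
  exact (((continuous_id.sub continuous_const).div_const 2).continuousOn.sub
    (continuousOn_const.mul hc3)).mul (contg (fun x hx => (hxpos x hx).ne'))

lemma II1 : IntervalIntegrable (fun x => r x * g x) MeasureTheory.volume 1.1 a₁ := by
  have h := cont1.intervalIntegrable (μ := MeasureTheory.volume)
  rw [intervalIntegrable_iff] at h ⊢
  exact h.congr_fun (fun x hx => (eq1 (Set.uIoc_subset_uIcc hx)).symm) measurableSet_uIoc

lemma II2 : IntervalIntegrable (fun x => r x * g x) MeasureTheory.volume a₁ a₂ := by
  have h := cont2.intervalIntegrable (μ := MeasureTheory.volume)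
  rw [intervalIntegrable_iff] at h ⊢
  exact h.congr_fun (fun x hx => (eq2 (Set.uIoc_subset_uIcc hx)).symm) measurableSet_uIoc

lemma II3 : IntervalIntegrable (fun x => r x * g x) MeasureTheory.volume a₂ 1.9 := by
  have h := cont3.intervalIntegrable (μ := MeasureTheory.volume)
  rw [intervalIntegrable_iff] at h ⊢
  exact h.congr_fun (fun x hx => (eq3 (Set.uIoc_subset_uIcc hx)).symm) measurableSet_uIoc

lemma int1val : ∫ x in (1.1:ℝ)..a₁, r x * g x = F1 a₁ - F1 1.1 := by
  rw [intervalIntegral.integral_congr eq1]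
  apply intervalIntegral.integral_eq_sub_of_hasDerivAt
  · intro x hx
    rw [Set.uIcc_of_le a1_gt.le] at hx
    exact hF1 x (lt_of_lt_of_le (by norm_num) hx.1)
  · exact cont1.intervalIntegrable

lemma int2val : ∫ x in a₁..a₂, r x * g x = F2 a₂ - F2 a₁ := by
  rw [intervalIntegral.integral_congr eq2]
  apply intervalIntegral.integral_eq_sub_of_hasDerivAt
  · intro x hx
    rw [Set.uIcc_of_le a1_lt_a2.le] at hx
    have hxpos : 0 < x := lt_of_lt_of_le a1_pos hx.1
    refine hF2 x hxpos (w_pos hxpos ?_)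
    have := hx.2; have := a2_lt; norm_num; nlinarith
  · exact cont2.intervalIntegrable

lemma int3val : ∫ x in a₂..(1.9:ℝ), r x * g x = F3 1.9 - F3 a₂ := by
  rw [intervalIntegral.integral_congr eq3]
  apply intervalIntegral.integral_eq_sub_of_hasDerivAt
  · intro x hx
    rw [Set.uIcc_of_le a2_lt.le] at hx
    exact hF3 x (lt_of_lt_of_le a2_pos hx.1)
  · exact cont3.intervalIntegrable

end Stmt9Aux


/-- Closed form of `∫_{1.1}^{1.9} r(x) g(x) dx`. -/
theorem statement9 :
    ∫ x in (1.1 : ℝ)..1.9, r x * g x =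
      (Real.log (2.9 / 1.9) / Real.log (2.9 / 1.1) + 1 / 2) ^ 2 -
        0.1 / Real.log (2.9 / 1.1) - 3 / 4 := by
  open Stmt9Aux in
  have hsplit : ∫ x in (1.1:ℝ)..1.9, r x * g x =
      (∫ x in (1.1:ℝ)..a₁, r x * g x) + ((∫ x in a₁..a₂, r x * g x) +
        (∫ x in a₂..(1.9:ℝ), r x * g x)) := by
    rw [intervalIntegral.integral_add_adjacent_intervals II2 II3,
      intervalIntegral.integral_add_adjacent_intervals II1 (II2.trans II3)]
  rw [hsplit, int1val, int2val, int3val]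
  unfold F1 F2 F3
  rw [w_a1, w_a2, log_a1, log_a2]
  rw [show Real.log (2.9/1.9) = Real.log 2.9 - Real.log 1.9 from
    Real.log_div (by norm_num) (by norm_num)]
  rw [show Real.log (2.9/1.1) = Real.log 2.9 - Real.log 1.1 from
    Real.log_div (by norm_num) (by norm_num)]
  have hACne : Real.log 2.9 - Real.log 1.1 ≠ 0 := by
    have := hLpos
    rw [Real.log_div (by norm_num) (by norm_num)] at this
    exact this.ne'
  set A := Real.log 2.9
  set B := Real.log 1.9
  set C := Real.log 1.1
  field_simp
  ring
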